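/- Let p be a prime, m a positive integer, F a finite field with p^m elements, and ω a generator of the cyclic group F^×. Let ΓL₁(p^m) denote the subgroup of the permutation group of F generated by the Frobenius map x ↦ x^p and the multiplication map x ↦ ω·x. If C is a cyclic subgroup of ΓL₁(p^m) that acts transitively on F \ {0}, then C equals the subgroup consisting of all multiplication maps x ↦ c·x with c ∈ F^×. -/

import Mathlib

private lemma aux_modeq_of_dvd {a b n v : ℕ} (hv : v ∣ n) (h : a ≡ b [MOD n]) :
    a ≡ b [MOD v] := by
  rw [Nat.modEq_iff_dvd] at h ⊢
  exact dvd_trans (Int.natCast_dvd_natCast.mpr hv) h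

private lemma aux_geom_mul (x t : ℕ) (hx : 1 ≤ x) :
    (x - 1) * ∑ j ∈ Finset.range t, x ^ j = x ^ t - 1 := by
  induction t with
  | zero => simp
  | succ t ih =>
    rw [Finset.sum_range_succ, Nat.mul_add, ih]
    have h1 : 1 ≤ x ^ t := Nat.one_le_pow _ _ (by omega)
    have h2 : x ^ (t + 1) = x * x ^ t := by ring
    have h3 : (x - 1) * x ^ t = x * x ^ t - 1 * x ^ t := Nat.sub_mul x 1 (x ^ t)
    have h4 : x ^ t ≤ x * x ^ t := Nat.le_mul_of_pos_left _ (by omega)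
    omega

private lemma aux_nt (p m i a : ℕ) (hp : p.Prime) (hm : 0 < m) (s : ℕ → ℕ)
    (hs0 : s 0 = 0) (hss : ∀ k, s (k + 1) = 1 + p ^ i * s k)
    (hsurj : ∀ e : ℕ, ∃ k, a * s k ≡ e [MOD p ^ m - 1]) : m ∣ i := by
  by_contra hmi
  set n := p ^ m - 1 with hndef
  have hp2 : 2 ≤ p := hp.two_le
  have hpm : 2 ≤ p ^ m := Nat.one_lt_pow hm.ne' hp.one_lt
  have hn1 : 1 ≤ n := by omega
  -- surjectivity in `ZMod v` for any divisor `v` of `n`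
  have hsurjZ : ∀ v : ℕ, v ∣ n → 0 < v →
      ∀ z : ZMod v, ∃ k, (a : ZMod v) * ((s k : ℕ) : ZMod v) = z := by
    intro v hv hv0 z
    haveI : NeZero v := ⟨hv0.ne'⟩
    obtain ⟨e, rfl⟩ := ZMod.natCast_zmod_surjective z
    obtain ⟨k, hk⟩ := hsurj e
    have h2 := (ZMod.natCast_eq_natCast_iff _ _ _).mpr (aux_modeq_of_dvd hv hk)
    refine ⟨k, ?_⟩
    push_cast at h2
    exact h2
  -- no divisor (> 1) of n divides p
  have hrp : ∀ r : ℕ, 2 ≤ r → r ∣ n → ¬ r ∣ p := by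
    intro r h2 hrn hdl
    have h1 : r ∣ p ^ m := dvd_pow hdl hm.ne'
    have h3 : r ∣ p ^ m - n := Nat.dvd_sub h1 hrn
    have h4 : p ^ m - n = 1 := by omega
    rw [h4] at h3
    have := Nat.le_of_dvd one_pos h3
    omega
  -- key1 : primes dividing n
  have key1 : ∀ r : ℕ, r.Prime → r ∣ n → (¬ r ∣ a) ∧ p ^ i ≡ 1 [MOD r] := by
    intro r hr hrn
    haveI : Fact r.Prime := ⟨hr⟩
    have hpz : (p : ZMod r) ≠ 0 := by
      rw [Ne, ZMod.natCast_eq_zero_iff]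
      exact hrp r hr.two_le hrn
    have ha : ¬ r ∣ a := by
      intro h
      have haz : (a : ZMod r) = 0 := (ZMod.natCast_eq_zero_iff _ _).mpr h
      obtain ⟨k, hk⟩ := hsurjZ r hrn hr.pos 1
      rw [haz, zero_mul] at hk
      exact one_ne_zero hk.symm
    refine ⟨ha, ?_⟩
    have haz : (a : ZMod r) ≠ 0 := fun h =>
      ha ((ZMod.natCast_eq_zero_iff _ _).mp h)
    set P := (p : ZMod r) ^ i with hPdef
    have hP : P = 1 := by
      by_contra hP1
      have claim : ∀ k, (1 - P) * ((a : ZMod r) * ((s k : ℕ) : ZMod r)) =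
          (a : ZMod r) * (1 - P ^ k) := by
        intro k
        induction k with
        | zero => simp [hs0]
        | succ k ih =>
          have h1 : ((s (k + 1) : ℕ) : ZMod r) = 1 + P * ((s k : ℕ) : ZMod r) := by
            rw [hss]; push_cast; ring
          rw [h1, pow_succ]
          linear_combination P * ih
      obtain ⟨k, hk⟩ := hsurjZ r hrn hr.pos ((a : ZMod r) * (1 - P)⁻¹)
      have h2 := claim k
      rw [hk] at h2
      have h3 : (1 : ZMod r) - P ≠ 0 := sub_ne_zero.mpr (Ne.symm hP1)
      have h4 : (1 - P) * ((a : ZMod r) * (1 - P)⁻¹) = (a : ZMod r) := by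
        field_simp
      rw [h4] at h2
      have h5 : (a : ZMod r) * P ^ k = 0 := by linear_combination h2
      exact (mul_ne_zero haz (pow_ne_zero _ (pow_ne_zero _ hpz))) h5
    have : ((p ^ i : ℕ) : ZMod r) = ((1 : ℕ) : ZMod r) := by push_cast; exact hP
    exact (ZMod.natCast_eq_natCast_iff _ _ _).mp this
  -- key2 : the condition mod 4
  have key2 : 4 ∣ n → p ^ i ≡ 1 [MOD 4] := by
    intro h4n
    have h2n : 2 ∣ n := dvd_trans ⟨2, rfl⟩ h4n
    have hpodd : ¬ 2 ∣ p := hrp 2 le_rfl h2n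
    have hp4 : p % 4 = 1 ∨ p % 4 = 3 := by omega
    have hcast : ((p % 4 : ℕ) : ZMod 4) = (p : ZMod 4) := ZMod.natCast_mod p 4
    have hP : (p : ZMod 4) ^ i = 1 := by
      rcases hp4 with h | h
      · rw [← hcast, h]; norm_num
      · have h91 : ((3 : ZMod 4)) ^ 2 = 1 := by decide
        rcases Nat.even_or_odd i with ⟨w, hw⟩ | ⟨w, hw⟩
        · rw [← hcast, h, hw]
          push_cast
          rw [show w + w = 2 * w by ring, pow_mul, h91, one_pow]
        · exfalso
          have hP3 : (p : ZMod 4) = 3 := by rw [← hcast, h]; norm_num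
          have ha2 : ¬ 2 ∣ a := (key1 2 Nat.prime_two h2n).1
          have h33 : (p : ZMod 4) ^ i = 3 := by
            rw [hP3, hw, pow_succ, pow_mul, h91, one_pow, one_mul]
          have claim : ∀ k, (a : ZMod 4) * ((s k : ℕ) : ZMod 4) = 0 ∨
              (a : ZMod 4) * ((s k : ℕ) : ZMod 4) = (a : ZMod 4) := by
            intro k
            induction k with
            | zero => left; simp [hs0]
            | succ k ih =>
              have h1 : ((s (k + 1) : ℕ) : ZMod 4) =
                  1 + (p : ZMod 4) ^ i * ((s k : ℕ) : ZMod 4) := by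
                rw [hss]; push_cast; ring
              rw [h33] at h1
              rcases ih with hc | hc
              · right
                rw [h1]
                linear_combination 3 * hc
              · left
                have h40 : (4 : ZMod 4) = 0 := by decide
                rw [h1]
                linear_combination 3 * hc + (a : ZMod 4) * h40
          obtain ⟨k, hk⟩ := hsurjZ 4 h4n (by norm_num) 2
          have ha4' : a % 4 = 1 ∨ a % 4 = 3 := by omega
          have hacast : ((a % 4 : ℕ) : ZMod 4) = (a : ZMod 4) := ZMod.natCast_mod a 4
          rcases claim k with h | h <;> rw [hk] at h
          · exact (by decide : (2 : ZMod 4) ≠ 0) h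
          · rcases ha4' with h' | h' <;> rw [← hacast, h'] at h <;> revert h <;> decide
    have : ((p ^ i : ℕ) : ZMod 4) = ((1 : ℕ) : ZMod 4) := by push_cast; exact hP
    exact (ZMod.natCast_eq_natCast_iff _ _ _).mp this
  -- key3 : passing to the gcd exponent
  have key3 : ∀ v : ℕ, v ∣ n → p ^ i ≡ 1 [MOD v] → v ∣ p ^ (Nat.gcd i m) - 1 := by
    intro v hvn hvi
    have h1 : (1 : ℕ) ≡ p ^ m [MOD v] :=
      (Nat.modEq_iff_dvd' (Nat.one_le_pow _ _ (by omega))).mpr hvn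
    have h1' : (p : ZMod v) ^ m = 1 := by
      have := (ZMod.natCast_eq_natCast_iff _ _ _).mpr h1
      push_cast at this
      exact this.symm
    have h2' : (p : ZMod v) ^ i = 1 := by
      have := (ZMod.natCast_eq_natCast_iff _ _ _).mpr hvi
      push_cast at this
      exact this
    have h3 : orderOf (p : ZMod v) ∣ Nat.gcd i m :=
      Nat.dvd_gcd (orderOf_dvd_of_pow_eq_one h2') (orderOf_dvd_of_pow_eq_one h1')
    have h4 : (p : ZMod v) ^ (Nat.gcd i m) = 1 := orderOf_dvd_iff_pow_eq_one.mp h3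
    have h5 : (1 : ℕ) ≡ p ^ (Nat.gcd i m) [MOD v] := by
      rw [← ZMod.natCast_eq_natCast_iff]
      push_cast
      exact h4.symm
    exact (Nat.modEq_iff_dvd' (Nat.one_le_pow _ _ (by omega))).mp h5
  -- setup for the contradiction
  set d := Nat.gcd i m with hddef
  have hdm : d ∣ m := Nat.gcd_dvd_right i m
  have hdi : d ∣ i := Nat.gcd_dvd_left i m
  have hd1 : 1 ≤ d := Nat.gcd_pos_of_pos_right i hm
  obtain ⟨t, ht⟩ := hdm
  have ht0 : t ≠ 0 := by rintro rfl; rw [mul_zero] at ht; omega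
  have ht2 : 2 ≤ t := by
    by_contra h
    interval_cases t
    · exact ht0 rfl
    · rw [mul_one] at ht; exact hmi (ht ▸ hdi)
  set x := p ^ d with hxdef
  have hx2 : 2 ≤ x := Nat.one_lt_pow (by omega) hp.one_lt
  have hxt : x ^ t = p ^ m := by rw [ht, pow_mul]
  set sstar := ∑ j ∈ Finset.range t, x ^ j with hsstar
  have hgeom : (x - 1) * sstar = n := by
    rw [aux_geom_mul x t (by omega), hxt]
  have hsdvd : sstar ∣ n := ⟨x - 1, by rw [← hgeom]; ring⟩
  have hs0' : sstar ≠ 0 := by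
    intro h; rw [h, mul_zero] at hgeom; omega
  have hx10 : x - 1 ≠ 0 := by omega
  -- sstar divides t
  have hdvdt : sstar ∣ t := by
    rw [← Nat.factorization_le_iff_dvd hs0' ht0, Finsupp.le_def]
    intro r
    by_cases hr : r.Prime
    · by_cases hrs : r ∣ sstar
      · have hrn : r ∣ n := hrs.trans hsdvd
        have hrx1 : r ∣ x - 1 := key3 r hrn (key1 r hr hrn).2
        have hrx : ¬ r ∣ x := by
          intro hh
          exact hrp r hr.two_le hrn (hr.dvd_of_dvd_pow hh)
        haveI : Fact r.Prime := ⟨hr⟩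
        rw [Nat.factorization_def _ hr, Nat.factorization_def _ hr]
        have hv1 : padicValNat r n = padicValNat r (x - 1) + padicValNat r sstar := by
          rw [← hgeom, padicValNat.mul hx10 hs0']
        rcases eq_or_ne r 2 with rfl | hr2
        · -- r = 2
          have hpodd : ¬ 2 ∣ p := hrp 2 le_rfl hrn
          -- t is even
          have hxodd : x % 2 = 1 := by
            rcases Nat.even_or_odd x with hh | hh
            · exact absurd hh.two_dvd hrx
            · omega
          have hcs : ((sstar : ℕ) : ZMod 2) = ((t : ℕ) : ZMod 2) := by
            rw [hsstar]
            push_cast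
            have hx1 : ((x : ℕ) : ZMod 2) = 1 := by
              conv_lhs => rw [← ZMod.natCast_mod x 2, hxodd]
              norm_num
            rw [hx1]
            simp
          have hst2 : sstar % 2 = t % 2 := (ZMod.natCast_eq_natCast_iff _ _ _).mp hcs
          have h2s : 2 ∣ sstar := hrs
          have hteven : Even t := by
            rw [Nat.even_iff]; omega
          -- 4 divides n
          obtain ⟨w, hw⟩ := hteven
          have hp21 : p % 2 = 1 := by omega
          have hyodd : p ^ (d * w) % 2 = 1 := by
            rw [Nat.pow_mod, hp21, one_pow]
            norm_num
          have h4n : 4 ∣ n := by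
            have hy1 : 1 ≤ p ^ (d * w) := Nat.one_le_pow _ _ (by omega)
            have hysq : p ^ (d * w) * p ^ (d * w) = p ^ m := by
              rw [← pow_add, ht, hw]; ring_nf
            have hn' : n = (p ^ (d * w) - 1) * (p ^ (d * w) + 1) := by
              have h5 : (p ^ (d * w) - 1) * (p ^ (d * w) + 1) =
                  p ^ (d * w) * (p ^ (d * w) + 1) - 1 * (p ^ (d * w) + 1) :=
                Nat.sub_mul _ _ _
              have h6 : p ^ (d * w) * (p ^ (d * w) + 1) =
                  p ^ (d * w) * p ^ (d * w) + p ^ (d * w) := by ring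
              omega
            rw [hn', show (4 : ℕ) = 2 * 2 by norm_num]
            exact mul_dvd_mul (by omega) (by omega)
          have h4x : 4 ∣ x - 1 := key3 4 h4n (key2 h4n)
          have hxp1 : padicValNat 2 (x + 1) = 1 := by
            obtain ⟨c4, hc4⟩ := h4x
            have hxc : x + 1 = 2 * (2 * c4 + 1) := by omega
            rw [hxc, padicValNat.mul (by norm_num) (by omega),
              padicValNat.self (by norm_num), padicValNat.eq_zero_of_not_dvd (by omega)]
          have hlte := padicValNat.pow_two_sub_pow (x := x) (y := 1) (by omega)
            (by simpa using hrx1) hrx ht0 ⟨w, hw⟩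
          rw [one_pow, hxt, ← hndef] at hlte
          omega
        · -- r odd
          have hrodd : Odd r := hr.odd_of_ne_two hr2
          have hlte := padicValNat.pow_sub_pow hrodd (y := 1) (by omega : 1 < x)
            (by simpa using hrx1) hrx ht0
          rw [one_pow, hxt, ← hndef] at hlte
          omega
      · rw [Nat.factorization_eq_zero_of_not_dvd hrs]
        exact Nat.zero_le _
    · simp [Nat.factorization_eq_zero_of_not_prime _ hr]
  -- final contradiction: sstar ≤ t but sstar > t
  have hle' : sstar ≤ t := Nat.le_of_dvd (by omega) hdvdt
  have hgt : t < sstar := by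
    have h1 : ∑ j ∈ Finset.range t, 1 < ∑ j ∈ Finset.range t, x ^ j := by
      refine Finset.sum_lt_sum (fun j _ => Nat.one_le_pow _ _ (by omega)) ⟨1, Finset.mem_range.mpr (by omega), ?_⟩
      rw [pow_one]; omega
    simpa using h1
  omega


/-- The only cyclic subgroup of `ΓL₁(p^m)` (viewed inside the permutation group of the
finite field `F` with `p^m` elements, generated by the Frobenius `x ↦ x^p` and multiplication
by a generator `ω` of `F^×`) acting transitively on the nonzero elements of `F` is the
subgroup of all multiplication maps `x ↦ c·x`, `c ∈ F^×`. -/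
theorem cyclic_transitive_subgroup_of_gammaL_one
    (p m : ℕ) (hp : p.Prime) (hm : 0 < m) (F : Type*) [Field F] [Fintype F]
    (hF : Fintype.card F = p ^ m) (ω : Fˣ) (hω : ∀ x : Fˣ, x ∈ Subgroup.zpowers ω)
    (C : Subgroup (Equiv.Perm F)) (hcyc : IsCyclic C)
    (hle : C ≤ Subgroup.closure {e : Equiv.Perm F |
        (∀ x : F, e x = x ^ p) ∨ (∀ x : F, e x = (ω : F) * x)})
    (htrans : ∀ x y : F, x ≠ 0 → y ≠ 0 → ∃ g ∈ C, g x = y) :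
    (C : Set (Equiv.Perm F)) =
      {e : Equiv.Perm F | ∃ c : Fˣ, ∀ x : F, e x = (c : F) * x} := by
  classical
  -- the key Frobenius-power identity
  have hKpow : ∀ (k : ℕ), m ∣ k → ∀ x : F, x ^ p ^ k = x := by
    intro k hk x
    obtain ⟨u, rfl⟩ := hk
    induction u with
    | zero => simp
    | succ u ih =>
      have h1 : p ^ (m * (u + 1)) = p ^ (m * u) * p ^ m := by
        rw [← pow_add]; ring_nf
      rw [h1, pow_mul, ih, ← hF, FiniteField.pow_card]
  -- every element of the closure has the form x ↦ c * x ^ (p ^ i)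
  have hform : ∀ e : Equiv.Perm F, e ∈ Subgroup.closure {e : Equiv.Perm F |
      (∀ x : F, e x = x ^ p) ∨ (∀ x : F, e x = (ω : F) * x)} →
      ∃ (c : Fˣ) (i : ℕ), ∀ x : F, e x = (c : F) * x ^ p ^ i := by
    intro e he
    induction he using Subgroup.closure_induction with
    | mem f hf =>
      rcases hf with h | h
      · exact ⟨1, 1, fun y => by rw [h y]; simp [pow_one]⟩
      · exact ⟨ω, 0, fun y => by rw [h y]; simp⟩
    | one => exact ⟨1, 0, fun y => by simp⟩
    | mul f g hf hg ihf ihg =>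
      obtain ⟨c1, i1, h1⟩ := ihf
      obtain ⟨c2, i2, h2⟩ := ihg
      refine ⟨c1 * c2 ^ p ^ i1, i1 + i2, fun z => ?_⟩
      have hmulapp : (f * g) z = f (g z) := rfl
      rw [hmulapp, h2 z, h1]
      push_cast
      ring
    | inv f hf ihf =>
      obtain ⟨c, i, h⟩ := ihf
      refine ⟨(c ^ p ^ (i * (m - 1)))⁻¹, i * (m - 1), fun z => ?_⟩
      have him : m ∣ i * (m - 1) + i := by
        obtain ⟨m', rfl⟩ : ∃ m', m = m' + 1 := ⟨m - 1, by omega⟩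
        have h1 : i * (m' + 1 - 1) + i = i * (m' + 1) := by
          rw [Nat.add_sub_cancel]; ring
        rw [h1]
        exact dvd_mul_left _ _
      apply f.injective
      rw [show f (f⁻¹ z) = z from Equiv.apply_symm_apply f z, h]
      push_cast
      rw [mul_pow, inv_pow, ← pow_mul, ← pow_mul, ← pow_add,
        hKpow _ him, hKpow _ him, ← mul_assoc,
        mul_inv_cancel₀ c.ne_zero, one_mul]
  -- the cyclic generator
  obtain ⟨g0, hg0⟩ := hcyc.exists_generator
  set g : Equiv.Perm F := (g0 : Equiv.Perm F) with hgdef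
  have hgC : g ∈ C := g0.2
  have hpowg : ∀ h ∈ C, ∃ k : ℕ, g ^ k = h := by
    intro h hh
    have h1 := hg0 ⟨h, hh⟩
    have h2 : (⟨h, hh⟩ : C) ∈ Submonoid.powers g0 :=
      ((isOfFinOrder_of_finite g0).mem_powers_iff_mem_zpowers).mpr h1
    obtain ⟨k, hk⟩ := h2
    refine ⟨k, ?_⟩
    have := congrArg (Subtype.val) hk
    simpa using this
  obtain ⟨c, i, hgci⟩ := hform g (hle hgC)
  -- ω is a generator
  have hωgen : ∀ u : Fˣ, ∃ e : ℕ, ω ^ e = u := by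
    intro u
    have := ((isOfFinOrder_of_finite ω).mem_powers_iff_mem_zpowers).mpr (hω u)
    obtain ⟨e, he⟩ := this
    exact ⟨e, he⟩
  have hnord : orderOf ω = p ^ m - 1 := by
    rw [orderOf_eq_card_of_forall_mem_zpowers hω, Nat.card_eq_fintype_card,
      Fintype.card_units, hF]
  obtain ⟨a, ha⟩ := hωgen c
  -- the exponent sequence
  set s : ℕ → ℕ := fun k => Nat.rec 0 (fun _ acc => 1 + p ^ i * acc) k with hsdef
  have hs0 : s 0 = 0 := rfl
  have hss : ∀ k, s (k + 1) = 1 + p ^ i * s k := fun k => rfl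
  have horb : ∀ k : ℕ, (g ^ k) (1 : F) = (c : F) ^ (s k) := by
    intro k
    induction k with
    | zero => simp [hs0]
    | succ k ih =>
      rw [pow_succ', Equiv.Perm.mul_apply, ih, hgci, hss, ← pow_mul,
        pow_add, pow_one, mul_comm (p ^ i) (s k)]
  have hone : (1 : F) ≠ 0 := one_ne_zero
  -- transitivity gives surjectivity of the exponent map
  have hsurj : ∀ e : ℕ, ∃ k, a * s k ≡ e [MOD p ^ m - 1] := by
    intro e
    obtain ⟨h, hhC, hh1⟩ := htrans 1 ((ω ^ e : Fˣ) : F) hone (Units.ne_zero _)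
    obtain ⟨k, rfl⟩ := hpowg h hhC
    refine ⟨k, ?_⟩
    rw [horb k] at hh1
    have hu : ω ^ (a * s k) = ω ^ e := by
      rw [pow_mul, ha]
      apply Units.ext
      push_cast at hh1 ⊢
      exact hh1
    have := pow_eq_pow_iff_modEq.mp hu
    rwa [hnord] at this
  -- the number-theoretic lemma forces m ∣ i
  have hmi : m ∣ i := aux_nt p m i a hp hm s hs0 hss hsurj
  have hgc : ∀ x : F, g x = (c : F) * x := fun x => by
    rw [hgci x, hKpow i hmi x]
  have hgk : ∀ (k : ℕ) (x : F), (g ^ k) x = (c : F) ^ k * x := by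
    intro k
    induction k with
    | zero => intro x; simp
    | succ k ih =>
      intro x
      rw [pow_succ', Equiv.Perm.mul_apply, ih, hgc, ← mul_assoc, ← pow_succ']
  -- conclusion
  ext e
  simp only [SetLike.mem_coe, Set.mem_setOf_eq]
  constructor
  · intro he
    obtain ⟨k, rfl⟩ := hpowg e he
    exact ⟨c ^ k, fun x => by rw [hgk k x]; push_cast; ring⟩
  · rintro ⟨u, hu⟩
    obtain ⟨h, hhC, hh1⟩ := htrans 1 (u : F) hone u.ne_zero
    obtain ⟨k, rfl⟩ := hpowg h hhC
    rw [hgk k 1, mul_one] at hh1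
    have he : e = g ^ k := by
      ext x
      rw [hu x, hgk k x, hh1]
    rw [he]
    exact pow_mem hgC k
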